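/- Let H be an infinite-dimensional separable Hilbert space and K ⊂ H a compact subset. Then for every C > 1 there exists a frame {h_i}_{i∈ℕ} for H with frame bounds A, B satisfying B/A < C such that: for every f ∈ K and every ε > 0 there exist an index i ∈ ℕ and a scalar c with ‖f − c·h_i‖_H < ε (i.e., the best 1-term approximation error from the frame is 0 on K). -/

import Mathlib

open scoped RealInnerProductSpace

lemma exists_hilbertBasis_nat
    {H : Type*} [NormedAddCommGroup H] [InnerProductSpace ℝ H] [CompleteSpace H]
    [TopologicalSpace.SeparableSpace H]
    (hinf : ¬ FiniteDimensional ℝ H) : Nonempty (HilbertBasis ℕ ℝ H) := by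
  obtain ⟨w, b, hb⟩ := exists_hilbertBasis ℝ H
  have hwo : Orthonormal ℝ ((↑) : w → H) := by
    have := b.orthonormal; rwa [hb] at this
  -- countable
  have hcct : w.Countable := by
    have hd : w.PairwiseDisjoint (fun x => Metric.ball x (1/2)) := by
      intro x hx y hy hxy
      apply Metric.ball_disjoint_ball
      have h2 : dist x y = Real.sqrt 2 := by
        rw [dist_eq_norm, ← Real.sqrt_sq (norm_nonneg (x - y))]
        congr 1
        rw [@norm_sub_sq_real]
        have hx1 : ‖x‖ = 1 := by
          simpa using hwo.1 ⟨x, hx⟩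
        have hy1 : ‖y‖ = 1 := by
          simpa using hwo.1 ⟨y, hy⟩
        have hxy0 : ⟪x, y⟫ = 0 := by
          have := hwo.2 (i := ⟨x, hx⟩) (j := ⟨y, hy⟩) (by simpa using hxy)
          simpa using this
        rw [hx1, hy1, hxy0]; ring
      rw [h2]
      nlinarith [Real.sq_sqrt (by norm_num : (2:ℝ) ≥ 0), Real.sqrt_nonneg 2]
    have := hd.countable_of_isOpen (fun x _ => Metric.isOpen_ball)
      (fun x _ => ⟨x, by simp⟩)
    exact this
  -- infinite
  have hinfw : w.Infinite := by
    by_contra hfin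
    rw [Set.not_infinite] at hfin
    apply hinf
    have hdense := b.dense_span
    have hr : Set.range ⇑b = w := by rw [hb, Subtype.range_coe]
    rw [hr] at hdense
    have hfd : FiniteDimensional ℝ (Submodule.span ℝ w) :=
      FiniteDimensional.span_of_finite ℝ hfin
    have hclosed : IsClosed ((Submodule.span ℝ w : Submodule ℝ H) : Set H) :=
      Submodule.closed_of_finiteDimensional _
    have htop : (Submodule.span ℝ w : Submodule ℝ H) = ⊤ := by
      rw [← hdense, hclosed.submodule_topologicalClosure_eq]
    have : FiniteDimensional ℝ (⊤ : Submodule ℝ H) := htop ▸ hfd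
    exact (Submodule.topEquiv (R := ℝ) (M := H)).finiteDimensional
  haveI := hcct.to_subtype
  haveI := hinfw.to_subtype
  obtain ⟨e⟩ : Nonempty (↥w ≃ ℕ) := nonempty_equiv_of_countable
  set v : ℕ → H := fun n => ((e.symm n : ↥w) : H) with hv
  have hvo : Orthonormal ℝ v := hwo.comp _ e.symm.injective
  have hrv : Set.range v = w := by
    rw [hv]
    have h1 : (fun n => ((e.symm n : ↥w) : H)) = ((↑) : ↥w → H) ∘ e.symm := rfl
    rw [h1, Set.range_comp, Set.range_eq_univ.mpr e.symm.surjective, Set.image_univ,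
      Subtype.range_coe]
  have hsp : ⊤ ≤ (Submodule.span ℝ (Set.range v)).topologicalClosure := by
    have hdense := b.dense_span
    have hr : Set.range ⇑b = w := by rw [hb, Subtype.range_coe]
    rw [hr] at hdense
    rw [hrv, hdense]
  exact ⟨HilbertBasis.mk hvo hsp⟩

set_option maxHeartbeats 2000000 in
/-- Let `H` be an infinite-dimensional separable Hilbert space and
`K ⊆ H` compact.  For every `C > 1` there is a frame `{h_i}` for `H` with frame
bounds `A, B` satisfying `B/A < C` such that every `f ∈ K` can be approximated to
arbitrary precision by a single scalar multiple of one frame element. -/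
theorem exists_pathological_frame_one_term
    {H : Type*} [NormedAddCommGroup H] [InnerProductSpace ℝ H] [CompleteSpace H]
    [TopologicalSpace.SeparableSpace H]
    (hinf : ¬ FiniteDimensional ℝ H)
    (K : Set H) (hK : IsCompact K) (C : ℝ) (hC : 1 < C) :
    ∃ (h : ℕ → H) (A B : ℝ), 0 < A ∧ 0 < B ∧ B / A < C ∧
      (∀ f : H, Summable (fun k => ⟪f, h k⟫ ^ 2) ∧
        A ^ 2 * ∑' k, ⟪f, h k⟫ ^ 2 ≤ ‖f‖ ^ 2 ∧
        ‖f‖ ^ 2 ≤ B ^ 2 * ∑' k, ⟪f, h k⟫ ^ 2) ∧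
      ∀ f ∈ K, ∀ ε > 0, ∃ (i : ℕ) (c : ℝ), ‖f - c • h i‖ < ε := by
  obtain ⟨b⟩ := exists_hilbertBasis_nat hinf
  haveI : Nonempty H := ⟨0⟩
  obtain ⟨d, hd⟩ := TopologicalSpace.exists_dense_seq H
  have hC0 : (0:ℝ) < C := by linarith
  have hCinv : 0 < 1/C := by positivity
  have hCinv1 : 1/C < 1 := by rw [div_lt_one hC0]; linarith
  obtain ⟨A, hA0, hA1, hAC⟩ : ∃ A : ℝ, 0 < A ∧ A < 1 ∧ 1/C < A :=
    ⟨(1 + 1/C)/2, by linarith, by linarith, by linarith⟩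
  obtain ⟨η, hη, hkey⟩ : ∃ η : ℝ, 0 < η ∧ A^2 * (1 + η) = 1 := by
    refine ⟨1/A^2 - 1, ?_, by field_simp; ring⟩
    have hA2 : A^2 < 1 := by nlinarith
    have h2 : 1 < 1/A^2 := by rw [lt_div_iff₀ (by positivity)]; linarith
    linarith
  obtain ⟨t, htpos, htsq⟩ : ∃ t : ℕ → ℝ, (∀ k, 0 < t k) ∧ (∀ k, t k ^ 2 = η/2^(k+1)) :=
    ⟨fun k => Real.sqrt (η/2^(k+1)), fun k => Real.sqrt_pos.mpr (by positivity),
      fun k => Real.sq_sqrt (by positivity)⟩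
  obtain ⟨h, he, ho⟩ : ∃ h : ℕ → H, (∀ k, h (2*k) = b k) ∧
      (∀ k, h (2*k+1) = (t k / ‖d k‖) • d k) := by
    refine ⟨fun n => if Even n then b (n/2) else (t (n/2) / ‖d (n/2)‖) • d (n/2), ?_, ?_⟩
    · intro k
      have h1 : Even (2*k) := even_two_mul k
      have h2 : 2*k/2 = k := by omega
      simp only [h1, if_pos, h2]
    · intro k
      have h1 : ¬ Even (2*k+1) := by simp [parity_simps]
      have h2 : (2*k+1)/2 = k := by omega
      simp only [h1, if_neg, h2, if_false]
  -- frame property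
  have frame : ∀ f : H, Summable (fun k => ⟪f, h k⟫ ^ 2) ∧
      A ^ 2 * ∑' k, ⟪f, h k⟫ ^ 2 ≤ ‖f‖ ^ 2 ∧
      ‖f‖ ^ 2 ≤ 1 ^ 2 * ∑' k, ⟪f, h k⟫ ^ 2 := by
    intro f
    have hge : (fun k => ⟪f, h (2*k)⟫^2) = fun k => ⟪f, b k⟫^2 := by
      funext k; rw [he k]
    have hsum_e : Summable (fun k => ⟪f, b k⟫^2) := by
      have := b.summable_inner_mul_inner f f
      simpa [sq, real_inner_comm f] using this
    have htsum_e : ∑' k, ⟪f, b k⟫^2 = ‖f‖^2 := by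
      have := b.tsum_inner_mul_inner f f
      rw [real_inner_self_eq_norm_sq] at this
      rw [← this]
      congr 1; funext k; rw [sq, real_inner_comm f]
    have hobound : ∀ k, ⟪f, h (2*k+1)⟫^2 ≤ η/2^(k+1) * ‖f‖^2 := by
      intro k
      rw [ho k, real_inner_smul_right]
      by_cases hdk : d k = 0
      · simp only [hdk, inner_zero_right, mul_zero, ne_eq]
        rw [zero_pow (by norm_num)]
        positivity
      · have hnd : 0 < ‖d k‖ := norm_pos_iff.mpr hdk
        have hcs : |⟪f, d k⟫| ≤ ‖f‖ * ‖d k‖ := abs_real_inner_le_norm f (d k)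
        have hcs2 : ⟪f, d k⟫^2 ≤ ‖f‖^2 * ‖d k‖^2 := by
          nlinarith [abs_nonneg ⟪f, d k⟫, sq_abs ⟪f, d k⟫]
        have ht2 := htsq k
        have h1 : (t k / ‖d k‖ * ⟪f, d k⟫)^2 = t k^2 * ⟪f, d k⟫^2 / ‖d k‖^2 := by
          field_simp
        rw [h1, ht2, div_le_iff₀ (by positivity)]
        have hη2 : (0:ℝ) ≤ η / 2^(k+1) := by positivity
        calc η / 2^(k+1) * ⟪f, d k⟫^2 ≤ η / 2^(k+1) * (‖f‖^2 * ‖d k‖^2) :=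
              mul_le_mul_of_nonneg_left hcs2 hη2
          _ = η / 2^(k+1) * ‖f‖^2 * ‖d k‖^2 := by ring
    have hform : (fun k : ℕ => η/2^(k+1) * ‖f‖^2) = fun k : ℕ => η/2/2^k * ‖f‖^2 := by
      funext k; rw [pow_succ]; ring
    have hmaj : Summable (fun k => η/2^(k+1) * ‖f‖^2) := by
      rw [hform]; exact (summable_geometric_two' η).mul_right _
    have hsum_o : Summable (fun k => ⟪f, h (2*k+1)⟫^2) :=
      Summable.of_nonneg_of_le (fun k => sq_nonneg _) hobound hmaj
    have hsum_e' : Summable (fun k => ⟪f, h (2*k)⟫^2) := by rw [hge]; exact hsum_e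
    have hsum : Summable (fun k => ⟪f, h k⟫^2) := hsum_e'.even_add_odd hsum_o
    have hsplit := tsum_even_add_odd (f := fun n => ⟪f, h n⟫^2) hsum_e' hsum_o
    refine ⟨hsum, ?_, ?_⟩
    · rw [← hsplit, hge, htsum_e]
      have hOle : ∑' k, ⟪f, h (2*k+1)⟫^2 ≤ η * ‖f‖^2 := by
        calc ∑' k, ⟪f, h (2*k+1)⟫^2 ≤ ∑' k, η/2^(k+1) * ‖f‖^2 :=
              Summable.tsum_le_tsum hobound hsum_o hmaj
          _ = η * ‖f‖^2 := by
              rw [hform, tsum_mul_right, tsum_geometric_two']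
      nlinarith [sq_nonneg ‖f‖, sq_nonneg A]
    · rw [← hsplit, hge, htsum_e]
      have hOnn : 0 ≤ ∑' k, ⟪f, h (2*k+1)⟫^2 := tsum_nonneg fun k => sq_nonneg _
      linarith
  refine ⟨h, A, 1, hA0, one_pos, ?_, frame, ?_⟩
  · rw [div_lt_iff₀ hA0]
    have h2 : 1 < C * A := by
      calc (1:ℝ) = C * (1/C) := by field_simp
        _ < C * A := mul_lt_mul_of_pos_left hAC hC0
    linarith
  · intro f _ ε hε
    obtain ⟨n, hn⟩ := (Metric.denseRange_iff.mp hd) f ε hε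
    by_cases hdn : d n = 0
    · refine ⟨0, 0, ?_⟩
      rw [zero_smul, sub_zero]
      rw [hdn, dist_zero_right] at hn
      exact hn
    · refine ⟨2*n+1, ‖d n‖ / t n, ?_⟩
      rw [ho n, smul_smul]
      have hnd : (0:ℝ) < ‖d n‖ := norm_pos_iff.mpr hdn
      have h1 : ‖d n‖ / t n * (t n / ‖d n‖) = 1 := by
        rw [div_mul_div_comm, mul_comm (‖d n‖) (t n), div_self (ne_of_gt (mul_pos (htpos n) hnd))]
      rw [h1, one_smul, ← dist_eq_norm]
      exact hn
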